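/- arXiv:1510.06813 — 2 statements merged into one kernel-verified Lean document; each statement's English description precedes it below -/
import Mathlib

section
/- Let B, C, D be metric spaces, π_C a Borel probability measure on C, and z : B × C → D a measurable map such that for a given ε > 0 there exist δ ∈ (0, ε/2] and a Borel set C' ⊆ C with π_C(C') > 1 − ε/2 satisfying: d_B(b,b') < δ and c ∈ C' imply d_D(z(b,c), z(b',c)) < ε. Then for every Borel set D' ⊆ D and every Borel probability measure π_B on B, (π_B × π_C)(z^{-1}((D')^ε)) ≥ (π_B × π_C)((z^{-1}(D'))^δ) − ε/2, where for a set E in a metric space, E^η denotes the open η-enlargement {x : d(x, E) < η}. -/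
open MeasureTheory Filter Topology
open scoped ENNReal

/-- Enlargement inequality: under probabilistic uniform continuity of `z` off a small
exceptional set `C'ᶜ`, the measure of `z⁻¹` of the `ε`-enlargement of `D'` dominates the
measure of the `δ`-enlargement (in the `B`-coordinate) of `z⁻¹(D')` minus `ε/2`. -/
theorem stmt_8 {B C D : Type*}
    [MetricSpace B] [MeasurableSpace B] [BorelSpace B]
    [MetricSpace C] [MeasurableSpace C] [BorelSpace C]
    [MetricSpace D] [MeasurableSpace D] [BorelSpace D]
    (πB : Measure B) (πC : Measure C)
    [IsProbabilityMeasure πB] [IsProbabilityMeasure πC]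
    (z : B × C → D) (hz : Measurable z)
    (ε δ : ℝ) (hε : 0 < ε) (hδ0 : 0 < δ) (hδ : δ ≤ ε / 2)
    (C' : Set C) (hC'm : MeasurableSet C') (hC' : (πC C').toReal > 1 - ε / 2)
    (hcont : ∀ (b b' : B) (c : C), dist b b' < δ → c ∈ C' →
      dist (z (b, c)) (z (b', c)) < ε)
    (D' : Set D) (hD' : MeasurableSet D') :
    ((πB.prod πC) (z ⁻¹' (Metric.thickening ε D'))).toReal ≥
      ((πB.prod πC)
        {p : B × C | ∃ b' : B, dist p.1 b' < δ ∧ (b', p.2) ∈ z ⁻¹' D'}).toReal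
        - ε / 2 := by
  set μ := πB.prod πC
  set E : Set (B × C) := {p : B × C | ∃ b' : B, dist p.1 b' < δ ∧ (b', p.2) ∈ z ⁻¹' D'}
  set S : Set (B × C) := Set.univ ×ˢ C'
  have hsub1 : E ∩ S ⊆ z ⁻¹' (Metric.thickening ε D') := by
    rintro ⟨b, c⟩ ⟨⟨b', hbb', hzD⟩, -, hc⟩
    rw [Set.mem_preimage, Metric.mem_thickening_iff]
    exact ⟨z (b', c), hzD, hcont b b' c hbb' hc⟩
  have hsub2 : E \ S ⊆ Set.univ ×ˢ C'ᶜ := by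
    rintro ⟨b, c⟩ ⟨-, hns⟩
    simp only [S, Set.mem_prod, Set.mem_univ, true_and] at hns ⊢
    exact hns
  have hES : μ E ≤ μ (z ⁻¹' (Metric.thickening ε D')) + πC C'ᶜ := by
    calc μ E ≤ μ (E ∩ S) + μ (E \ S) := measure_le_inter_add_diff μ E S
    _ ≤ μ (z ⁻¹' (Metric.thickening ε D')) + μ (Set.univ ×ˢ C'ᶜ) :=
        add_le_add (measure_mono hsub1) (measure_mono hsub2)
    _ = μ (z ⁻¹' (Metric.thickening ε D')) + πC C'ᶜ := by
        rw [Measure.prod_prod, measure_univ, one_mul]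
  have h1 : μ (z ⁻¹' (Metric.thickening ε D')) ≠ ∞ := measure_ne_top _ _
  have h2 : πC C'ᶜ ≠ ∞ := measure_ne_top _ _
  have hcompl : (πC C'ᶜ).toReal ≤ ε / 2 := by
    have : (πC C'ᶜ).toReal = 1 - (πC C').toReal := by
      rw [measure_compl hC'm (measure_ne_top _ _), measure_univ,
        ENNReal.toReal_sub_of_le (prob_le_one) ENNReal.one_ne_top, ENNReal.toReal_one]
    linarith
  have := ENNReal.toReal_mono (by finiteness) hES
  rw [ENNReal.toReal_add h1 h2] at this
  linarith
end

section
/- Let S be a metric space, (v_t)_{t} a finite family of functions defined by backward recursion v_{T+1} ≡ 0 and v_t(s) = ∫_G [ψ_t(s, x_t(s,g)) + ∫_I v_{t+1}(θ_t(s, x_t(s,g), i)) dι(i)] dγ(g), where each ψ_t : S × X → [−C_t, C_t] is jointly continuous, each θ_t(·,·,i) satisfies: for every ε > 0 there are δ_S, δ_X > 0 such that d_S(s,s') < δ_S and d_X(x,x') < δ_X imply ι({i : d_S(θ_t(s,x,i), θ_t(s',x',i)) < ε}) > 1 − ε, and each x_t satisfies: for every ε > 0 there is δ > 0 such that d_S(s,s')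 < δ implies γ({g : d_X(x_t(s,g), x_t(s',g)) < ε}) > 1 − ε. Then each v_t is a bounded continuous function of s. -/
open MeasureTheory Filter Topology
open scoped ENNReal

lemma key_tendsto {α E : Type*} [MeasurableSpace α] {μ : Measure α}
    [IsProbabilityMeasure μ] [PseudoMetricSpace E]
    {f : ℕ → α → E} {f₀ : α → E} {u : E → ℝ} {M : ℝ}
    (hu : Continuous u) (hub : ∀ e, |u e| ≤ M)
    (hmeasn : ∀ n, Measurable fun a => u (f n a))
    (hf₀ : ∀ U : Set E, IsClosed U → MeasurableSet (f₀ ⁻¹' U))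
    (hconv : ∀ r > (0:ℝ), ∀ ρ > (0:ℝ), ∀ᶠ n in atTop,
      (μ {a | dist (f n a) (f₀ a) < r}).toReal > 1 - ρ) :
    Tendsto (fun n => ∫ a, u (f n a) ∂μ) atTop (𝓝 (∫ a, u (f₀ a) ∂μ)) := by
  have hα : Nonempty α := by
    by_contra h
    rw [not_nonempty_iff] at h
    have h1 : μ Set.univ = 1 := measure_univ
    rw [Set.univ_eq_empty_iff.mpr h, measure_empty] at h1
    exact zero_ne_one h1
  obtain ⟨a₀⟩ := hα
  have hM : 0 ≤ M := (abs_nonneg _).trans (hub (f₀ a₀))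
  have hmeas0 : Measurable fun a => u (f₀ a) := by
    apply measurable_of_isClosed
    intro s hs
    exact hf₀ _ (hs.preimage hu)
  have hint : ∀ n, Integrable (fun a => u (f n a)) μ := fun n =>
    ⟨(hmeasn n).aestronglyMeasurable,
      HasFiniteIntegral.of_bounded (C := M)
        (Filter.Eventually.of_forall fun a => by
          rw [Real.norm_eq_abs]; exact hub (f n a))⟩
  have hint0 : Integrable (fun a => u (f₀ a)) μ :=
    ⟨hmeas0.aestronglyMeasurable,
      HasFiniteIntegral.of_bounded (C := M)
        (Filter.Eventually.of_forall fun a => by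
          rw [Real.norm_eq_abs]; exact hub (f₀ a))⟩
  -- the sequence of integrals of absolute differences tends to 0
  have hh0 : ∀ n a, 0 ≤ |u (f n a) - u (f₀ a)| := fun n a => abs_nonneg _
  have hhb : ∀ n a, |u (f n a) - u (f₀ a)| ≤ 2 * M := by
    intro n a
    rw [sub_eq_add_neg]
    refine (abs_add_le _ _).trans ?_
    rw [abs_neg]
    linarith [hub (f n a), hub (f₀ a)]
  have hhm : ∀ n, Measurable fun a => |u (f n a) - u (f₀ a)| := fun n =>
    ((hmeasn n).sub hmeas0).abs
  have hdiff : Tendsto (fun n => ∫ a, |u (f n a) - u (f₀ a)| ∂μ) atTop (𝓝 0) := by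
    rw [NormedAddCommGroup.tendsto_nhds_zero]
    intro ε hε
    set η := ε / 2 with hηdef
    set ρ := ε / (8 * M + 4) with hρdef
    have hη : 0 < η := by positivity
    have hρ : 0 < ρ := by positivity
    set U : ℕ → Set E := fun m =>
      {y | ∀ z z', dist z y < 2 / (m + 1) → dist z' y < 2 / (m + 1) → |u z - u z'| ≤ η}
      with hUdef
    have hUclosed : ∀ m : ℕ, IsClosed (U m) := by
      intro m
      apply isClosed_of_closure_subset
      intro y hy z z' hz hz'
      obtain ⟨y', hy'U, hy'd⟩ := Metric.mem_closure_iff.1 hy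
        (min (2 / (m + 1) - dist z y) (2 / (m + 1) - dist z' y))
        (lt_min (by linarith) (by linarith))
      have h1 : dist y y' < 2 / (m + 1) - dist z y :=
        lt_of_lt_of_le hy'd (min_le_left _ _)
      have h2 : dist y y' < 2 / (m + 1) - dist z' y :=
        lt_of_lt_of_le hy'd (min_le_right _ _)
      exact hy'U z z'
        (by linarith [dist_triangle z y y'])
        (by linarith [dist_triangle z' y y'])
    have hUmono : Monotone U := by
      intro m m' hmm' y hy z z' hz hz'
      have hle : (2:ℝ) / (m' + 1) ≤ 2 / (m + 1) := by
        apply div_le_div_of_nonneg_left (by norm_num) (by positivity)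
        have : (m:ℝ) ≤ m' := by exact_mod_cast hmm'
        linarith
      exact hy z z' (lt_of_lt_of_le hz hle) (lt_of_lt_of_le hz' hle)
    have hUuniv : ∀ y, ∃ m : ℕ, y ∈ U m := by
      intro y
      obtain ⟨δ, hδ, hδ'⟩ := Metric.continuousAt_iff.1 hu.continuousAt (η / 2) (by linarith)
      obtain ⟨m, hm⟩ := exists_nat_gt (2 / δ)
      refine ⟨m, fun z z' hz hz' => ?_⟩
      have h2m : 2 / ((m:ℝ) + 1) < δ := by
        rw [div_lt_iff₀ (by positivity)]
        rw [div_lt_iff₀ hδ] at hm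
        nlinarith
      have e1 := hδ' (show dist z y < δ by linarith)
      have e2 := hδ' (show dist z' y < δ by linarith)
      rw [Real.dist_eq] at e1 e2
      calc |u z - u z'| ≤ |u z - u y| + |u y - u z'| := abs_sub_le _ _ _
        _ ≤ η := by rw [abs_sub_comm (u y)]; linarith
    set V : ℕ → Set α := fun m => f₀ ⁻¹' (U m) with hVdef
    have hVm : ∀ m, MeasurableSet (V m) := fun m => hf₀ _ (hUclosed m)
    have hVunion : (⋃ m, V m) = Set.univ := by
      rw [hVdef]
      rw [← Set.preimage_iUnion]
      have : (⋃ m, U m) = Set.univ := by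
        apply Set.eq_univ_of_forall
        intro y
        obtain ⟨m, hm⟩ := hUuniv y
        exact Set.mem_iUnion.2 ⟨m, hm⟩
      rw [this, Set.preimage_univ]
    have hVtend : Tendsto (fun m => μ (V m)) atTop (𝓝 1) := by
      have h := tendsto_measure_iUnion_atTop (μ := μ) (s := V)
        (fun m n hmn => Set.preimage_mono (hUmono hmn))
      rwa [hVunion, measure_univ] at h
    have hVt : Tendsto (fun m => (μ (V m)).toReal) atTop (𝓝 1) := by
      have h := (ENNReal.tendsto_toReal (a := 1) (by simp)).comp hVtend
      simpa [Function.comp_def] using h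
    obtain ⟨m, hm⟩ := (hVt.eventually (eventually_gt_nhds (show 1 - ρ/2 < 1 by linarith))).exists
    have hrpos : (0:ℝ) < 2 / (m + 1) := by positivity
    filter_upwards [hconv (2 / (m + 1)) hrpos (ρ / 2) (by linarith)] with n hn
    set D : Set α := {a | η < |u (f n a) - u (f₀ a)|} with hDdef
    have hD : MeasurableSet D := measurableSet_lt measurable_const (hhm n)
    -- the good set is contained in Dᶜ ∪ (V m)ᶜ
    have hsub : {a | dist (f n a) (f₀ a) < 2 / (m + 1)} ⊆ Dᶜ ∪ (V m)ᶜ := by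
      intro a ha
      by_cases hV : a ∈ V m
      · left
        intro hDa
        have := hV (f n a) (f₀ a) ha (by simpa using hrpos)
        exact absurd this (not_le.2 hDa)
      · right; exact hV
    have h1 : μ {a | dist (f n a) (f₀ a) < 2 / (m + 1)} ≤ μ Dᶜ + μ (V m)ᶜ :=
      (measure_mono hsub).trans (measure_union_le _ _)
    have h2 : (μ {a | dist (f n a) (f₀ a) < 2 / (m + 1)}).toReal ≤
        (μ Dᶜ).toReal + (μ (V m)ᶜ).toReal := by
      rw [← ENNReal.toReal_add (measure_ne_top μ _) (measure_ne_top μ _)]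
      exact ENNReal.toReal_mono
        (ENNReal.add_ne_top.mpr ⟨measure_ne_top μ _, measure_ne_top μ _⟩) h1
    have hcompl : ∀ (s : Set α), MeasurableSet s → (μ sᶜ).toReal = 1 - (μ s).toReal := by
      intro s hs
      rw [measure_compl hs (measure_ne_top μ s), measure_univ,
        ENNReal.toReal_sub_of_le prob_le_one (by simp)]
      simp
    rw [hcompl D hD, hcompl (V m) (hVm m)] at h2
    have hDmeas : (μ D).toReal < ρ := by linarith
    -- integral estimate
    have hI1 : Integrable (fun a => |u (f n a) - u (f₀ a)|) μ :=
      ⟨(hhm n).aestronglyMeasurable,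
        HasFiniteIntegral.of_bounded (C := 2 * M)
          (Filter.Eventually.of_forall fun a => by
            rw [Real.norm_eq_abs, abs_of_nonneg (hh0 n a)]; exact hhb n a)⟩
    have hIind : Integrable (fun a => D.indicator (fun _ => 2 * M) a) μ :=
      (integrable_indicator_iff hD).2 (integrable_const _).integrableOn
    have hI2 : Integrable (fun a => η + D.indicator (fun _ => 2 * M) a) μ :=
      (integrable_const η).add hIind
    have hpt : ∀ a, |u (f n a) - u (f₀ a)| ≤ η + D.indicator (fun _ => 2 * M) a := by
      intro a
      by_cases hd : a ∈ D
      · rw [Set.indicator_of_mem hd]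
        linarith [hhb n a]
      · rw [Set.indicator_of_notMem hd]
        rw [hDdef] at hd
        simp only [Set.mem_setOf_eq, not_lt] at hd
        linarith
    have hIle : ∫ a, |u (f n a) - u (f₀ a)| ∂μ ≤ η + 2 * M * (μ D).toReal := by
      calc ∫ a, |u (f n a) - u (f₀ a)| ∂μ
          ≤ ∫ a, (η + D.indicator (fun _ => 2 * M) a) ∂μ := integral_mono hI1 hI2 hpt
        _ = η + (μ D).toReal * (2 * M) := by
            rw [integral_add (integrable_const _) hIind, integral_const,
              integral_indicator_const _ hD]
            simp [measure_univ, smul_eq_mul, measureReal_def]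
        _ = η + 2 * M * (μ D).toReal := by ring
    rw [Real.norm_eq_abs, abs_of_nonneg (integral_nonneg (fun a => hh0 n a))]
    have hmul : 2 * M * (μ D).toReal ≤ 2 * M * ρ :=
      mul_le_mul_of_nonneg_left hDmeas.le (by linarith)
    have hρ4 : 2 * M * ρ ≤ ε / 4 := by
      rw [hρdef, ← mul_div_assoc]
      rw [div_le_div_iff₀ (by linarith) (by norm_num)]
      nlinarith
    have : ∫ a, |u (f n a) - u (f₀ a)| ∂μ ≤ ε / 2 + ε / 4 := by
      rw [hηdef] at hIle
      linarith
    linarith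
  -- conclude
  rw [tendsto_iff_dist_tendsto_zero]
  apply squeeze_zero (fun n => dist_nonneg) (fun n => ?_) hdiff
  rw [Real.dist_eq, ← integral_sub (hint n) hint0]
  calc |∫ a, (u (f n a) - u (f₀ a)) ∂μ| = ‖∫ a, (u (f n a) - u (f₀ a)) ∂μ‖ :=
        (Real.norm_eq_abs _).symm
    _ ≤ ∫ a, ‖u (f n a) - u (f₀ a)‖ ∂μ := norm_integral_le_integral_norm _
    _ = ∫ a, |u (f n a) - u (f₀ a)| ∂μ := by simp [Real.norm_eq_abs]


lemma phi_cont {S X I : Type*} [MetricSpace S] [MeasurableSpace S] [BorelSpace S]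
    [MetricSpace X] [MeasurableSpace X] [MeasurableSpace I]
    {ι : Measure I} [IsProbabilityMeasure ι]
    {θ : S × X × I → S} (hθm : Measurable θ)
    (hθ : ∀ ε > (0:ℝ), ∃ δS > (0:ℝ), ∃ δX > (0:ℝ),
      ∀ (s s' : S) (xx xx' : X), dist s s' < δS → dist xx xx' < δX →
        (ι {i : I | dist (θ (s, xx, i)) (θ (s', xx', i)) < ε}).toReal > 1 - ε)
    {w : S → ℝ} {M : ℝ} (hw : Continuous w) (hwb : ∀ s, |w s| ≤ M) :
    Continuous (fun p : S × X => ∫ i, w (θ (p.1, p.2, i)) ∂ι) := by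
  rw [continuous_iff_seqContinuous]
  intro pn p hp
  have hsec : ∀ (q : S × X), Measurable fun i : I => θ (q.1, q.2, i) :=
    fun q => hθm.comp (measurable_const.prodMk (measurable_const.prodMk measurable_id))
  refine key_tendsto (u := w) (M := M)
    (f := fun n i => θ ((pn n).1, (pn n).2, i)) (f₀ := fun i => θ (p.1, p.2, i))
    hw hwb (fun n => hw.measurable.comp (hsec (pn n))) ?_ ?_
  · intro U hU
    exact hsec p hU.measurableSet
  · intro r hr ρ hρ
    set ε' := min r ρ with hε'def
    have hε' : 0 < ε' := lt_min hr hρ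
    obtain ⟨δS, hδS, δX, hδX, H⟩ := hθ ε' hε'
    have h1 : Tendsto (fun n => (pn n).1) atTop (𝓝 p.1) :=
      ((continuous_fst.tendsto p).comp hp)
    have h2 : Tendsto (fun n => (pn n).2) atTop (𝓝 p.2) :=
      ((continuous_snd.tendsto p).comp hp)
    have e1 : ∀ᶠ n in atTop, dist (pn n).1 p.1 < δS := by
      obtain ⟨N, hN⟩ := Metric.tendsto_atTop.1 h1 δS hδS
      exact eventually_atTop.2 ⟨N, hN⟩
    have e2 : ∀ᶠ n in atTop, dist (pn n).2 p.2 < δX := by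
      obtain ⟨N, hN⟩ := Metric.tendsto_atTop.1 h2 δX hδX
      exact eventually_atTop.2 ⟨N, hN⟩
    filter_upwards [e1, e2] with n h1n h2n
    have hH := H (pn n).1 p.1 (pn n).2 p.2 h1n h2n
    have hmono : (ι {i : I | dist (θ ((pn n).1, (pn n).2, i)) (θ (p.1, p.2, i)) < ε'}).toReal ≤
        (ι {i : I | dist (θ ((pn n).1, (pn n).2, i)) (θ (p.1, p.2, i)) < r}).toReal :=
      ENNReal.toReal_mono (measure_ne_top ι _)
        (measure_mono fun i hi => Set.mem_setOf_eq ▸ lt_of_lt_of_le hi (min_le_left r ρ))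
    have hle : 1 - ρ ≤ 1 - ε' := by
      have := min_le_right r ρ; linarith
    linarith


/-- Continuity and boundedness of the backward-recursion value functions of a nonatomic
game with a fixed environment: if the payoffs `ψ_t` are bounded and jointly continuous,
the transitions `θ_t` are probabilistically continuous in `(s,x)`, and the policies `x_t`
are probabilistically continuous in `s`, then each value function `v_t` is bounded and
continuous. -/
theorem stmt_14 {S X G I : Type*}
    [MetricSpace S] [MeasurableSpace S] [BorelSpace S]
    [MetricSpace X] [MeasurableSpace X] [BorelSpace X]
    [MeasurableSpace G] [MeasurableSpace I]
    (γ : Measure G) (ι : Measure I) [IsProbabilityMeasure γ] [IsProbabilityMeasure ι]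
    (T : ℕ) (ψ : ℕ → S × X → ℝ) (C : ℕ → ℝ)
    (θ : ℕ → S × X × I → S) (x : ℕ → S × G → X)
    (v : ℕ → S → ℝ)
    (hθm : ∀ t, Measurable (θ t)) (hxm : ∀ t, Measurable (x t))
    (hψb : ∀ t (s : S) (xx : X), |ψ t (s, xx)| ≤ C t)
    (hψc : ∀ t, Continuous (ψ t))
    (hθ : ∀ t, ∀ ε > (0 : ℝ), ∃ δS > (0 : ℝ), ∃ δX > (0 : ℝ),
      ∀ (s s' : S) (xx xx' : X), dist s s' < δS → dist xx xx' < δX →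
        (ι {i : I | dist (θ t (s, xx, i)) (θ t (s', xx', i)) < ε}).toReal > 1 - ε)
    (hx : ∀ t, ∀ ε > (0 : ℝ), ∃ δ > (0 : ℝ), ∀ s s' : S, dist s s' < δ →
      (γ {g : G | dist (x t (s, g)) (x t (s', g)) < ε}).toReal > 1 - ε)
    (hvT : ∀ s, v (T + 1) s = 0)
    (hrec : ∀ t ≤ T, ∀ s, v t s =
      ∫ g, (ψ t (s, x t (s, g)) + ∫ i, v (t + 1) (θ t (s, x t (s, g), i)) ∂ι) ∂γ) :
    ∀ t ≤ T + 1, (∃ M : ℝ, ∀ s, |v t s| ≤ M) ∧ Continuous (v t) := by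
  have step : ∀ t, t ≤ T → (∃ M : ℝ, ∀ s, |v (t+1) s| ≤ M) → Continuous (v (t+1)) →
      (∃ M : ℝ, ∀ s, |v t s| ≤ M) ∧ Continuous (v t) := by
    intro t ht hb hc
    obtain ⟨M, hM⟩ := hb
    set M' := max M 0 with hM'def
    have hM' : ∀ s, |v (t+1) s| ≤ M' := fun s => (hM s).trans (le_max_left _ _)
    have hM'0 : 0 ≤ M' := le_max_right _ _
    set w := v (t + 1) with hwdef
    have hΦc : Continuous (fun p : S × X => ∫ i, w (θ t (p.1, p.2, i)) ∂ι) :=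
      phi_cont (hθm t) (hθ t) hc hM'
    set K : S × X → ℝ := fun p => ψ t p + ∫ i, w (θ t (p.1, p.2, i)) ∂ι with hKdef
    have hKc : Continuous K := (hψc t).add hΦc
    have hΦb : ∀ p : S × X, |∫ i, w (θ t (p.1, p.2, i)) ∂ι| ≤ M' := by
      intro p
      rw [← Real.norm_eq_abs]
      calc ‖∫ i, w (θ t (p.1, p.2, i)) ∂ι‖ ≤ M' * (ι Set.univ).toReal :=
            norm_integral_le_of_norm_le_const
              (Filter.Eventually.of_forall fun i => by
                rw [Real.norm_eq_abs]; exact hM' _)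
        _ = M' := by simp
    have hKb : ∀ p : S × X, |K p| ≤ C t + M' := by
      intro p
      refine (abs_add_le _ _).trans (add_le_add (hψb t p.1 p.2) (hΦb p))
    have veq : v t = fun s => ∫ g, K (s, x t (s, g)) ∂γ := by
      funext s
      rw [hrec t ht s]
    have hsecx : ∀ s : S, Measurable fun g : G => x t (s, g) :=
      fun s => (hxm t).comp (measurable_const.prodMk measurable_id)
    constructor
    · refine ⟨C t + M', fun s => ?_⟩
      rw [veq, ← Real.norm_eq_abs]
      calc ‖∫ g, K (s, x t (s, g)) ∂γ‖ ≤ (C t + M') * (γ Set.univ).toReal :=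
            norm_integral_le_of_norm_le_const
              (Filter.Eventually.of_forall fun g => by
                rw [Real.norm_eq_abs]; exact hKb _)
        _ = C t + M' := by simp
    · rw [veq, continuous_iff_seqContinuous]
      intro sn s₀ hs
      refine key_tendsto (u := K) (M := C t + M')
        (f := fun n g => (sn n, x t (sn n, g))) (f₀ := fun g => (s₀, x t (s₀, g)))
        hKc hKb ?_ ?_ ?_
      · intro n
        exact (hKc.comp (continuous_const.prodMk continuous_id)).measurable.comp
          (hsecx (sn n))
      · intro U hU
        have hpre : ((fun g : G => (s₀, x t (s₀, g))) ⁻¹' U) =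
            (fun g : G => x t (s₀, g)) ⁻¹' ((fun xx : X => ((s₀ : S), xx)) ⁻¹' U) := rfl
        rw [hpre]
        exact hsecx s₀
          ((hU.preimage (continuous_const.prodMk continuous_id)).measurableSet)
      · intro r hr ρ hρ
        set ε' := min r ρ with hε'def
        have hε' : 0 < ε' := lt_min hr hρ
        obtain ⟨δ, hδ, H⟩ := hx t ε' hε'
        have e1 : ∀ᶠ n in atTop, dist (sn n) s₀ < min δ r := by
          obtain ⟨N, hN⟩ := Metric.tendsto_atTop.1 hs (min δ r) (lt_min hδ hr)
          exact eventually_atTop.2 ⟨N, hN⟩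
        filter_upwards [e1] with n hn
        have hH := H (sn n) s₀ (lt_of_lt_of_le hn (min_le_left _ _))
        have hsr : dist (sn n) s₀ < r := lt_of_lt_of_le hn (min_le_right _ _)
        have hsubset : {g : G | dist (x t (sn n, g)) (x t (s₀, g)) < ε'} ⊆
            {g : G | dist ((sn n, x t (sn n, g)) : S × X) (s₀, x t (s₀, g)) < r} := by
          intro g hg
          simp only [Set.mem_setOf_eq] at hg ⊢
          rw [Prod.dist_eq]
          exact max_lt hsr (lt_of_lt_of_le hg (min_le_left _ _))
        have hmono := ENNReal.toReal_mono (measure_ne_top γ _) (measure_mono hsubset)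
        have hle : 1 - ρ ≤ 1 - ε' := by
          have := min_le_right r ρ; linarith
        linarith
  have main : ∀ k t, t + k = T + 1 → (∃ M : ℝ, ∀ s, |v t s| ≤ M) ∧ Continuous (v t) := by
    intro k
    induction k with
    | zero =>
        intro t ht
        have ht' : t = T + 1 := by omega
        subst ht'
        refine ⟨⟨0, fun s => by rw [hvT s]; simp⟩, ?_⟩
        have : v (T + 1) = fun _ => (0 : ℝ) := funext hvT
        rw [this]
        exact continuous_const
    | succ k ih =>
        intro t ht
        have h1 : t ≤ T := by omega
        obtain ⟨hb, hc⟩ := ih (t + 1) (by omega)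
        exact step t h1 hb hc
  intro t ht
  exact main (T + 1 - t) t (by omega)
end
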